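/- arXiv:math/0604593 — 4 statements merged into one kernel-verified Lean document; each statement's English description precedes it below -/
import Mathlib

section
/- Let K'/K be a finite Galois extension of complete discretely valued fields with group Γ, R' the valuation ring of K', and M' a finite free R'-module with a semi-linear Γ-action. Then there exists an integer N ≥ 1 such that the uniformizer π of K raised to the power N kills H^1(Γ, M'); equivalently, H^1(Γ, M') is a torsion R-module. -/
open groupCohomology Finset


/-- Let `K'/K` be a finite Galois extension of complete discretely valued
fields with group `Γ`, `R'` the valuation ring of `K'`, and `M'` a finite free `R'`-module
with a semilinear `Γ`-action `ρ` (semilinear with respect to the natural Galois action of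
`Γ` on `R'`).  Then there exists an integer `N ≥ 1` such that `π^N` kills `H¹(Γ, M')`,
where `π` is a uniformizer of `K`; in particular `H¹(Γ, M')` is a torsion `R`-module. -/
theorem statement1
    (R : Type) [CommRing R] [IsDomain R] [IsDiscreteValuationRing R]
    [IsAdicComplete (IsLocalRing.maximalIdeal R) R]
    (K : Type) [Field K] [Algebra R K] [IsFractionRing R K]
    (K' : Type) [Field K'] [Algebra K K'] [FiniteDimensional K K'] [IsGalois K K']
    [Algebra R K'] [IsScalarTower R K K']
    (R' : Type) [CommRing R'] [IsDomain R'] [IsDiscreteValuationRing R']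
    [Algebra R R'] [Algebra R' K'] [IsScalarTower R R' K']
    [IsIntegralClosure R' R K']
    (π : R) (hπ : Irreducible π)
    (M' : Type) [AddCommGroup M'] [Module R' M'] [Module R M'] [IsScalarTower R R' M']
    [Module.Free R' M'] [Module.Finite R' M']
    (ρ : Representation R (K' ≃ₐ[K] K') M')
    (hsemi : ∀ (σ : K' ≃ₐ[K] K') (x : R') (m : M'),
      ρ σ (x • m) = (galRestrict R K K' R' σ x) • (ρ σ m)) :
    ∃ N : ℕ, 1 ≤ N ∧ ∀ y : groupCohomology (Rep.of ρ) 1, (π ^ N) • y = 0 := by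
  classical
  have hRK' : Function.Injective (algebraMap R K') := by
    rw [IsScalarTower.algebraMap_eq R K K']
    exact (algebraMap K K').injective.comp (IsFractionRing.injective R K)
  have hinj : Function.Injective (algebraMap R' K') :=
    IsIntegralClosure.algebraMap_injective R' R K'
  -- get θ with trace 1
  obtain ⟨θ, hθ⟩ := Algebra.trace_surjective K K' 1
  -- θ is algebraic over R
  have halg : IsAlgebraic R θ :=
    (IsFractionRing.isAlgebraic_iff R K K').mpr (Algebra.IsAlgebraic.isAlgebraic θ)
  obtain ⟨d0, hd00, hdint⟩ := IsAlgebraic.exists_integral_multiple halg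
  obtain ⟨x, d, hd0, hdx⟩ : ∃ (x : integralClosure R K') (d : R), d ≠ 0 ∧
      algebraMap R K' d * θ = x := ⟨⟨d0 • θ, hdint⟩, d0, hd00, (Algebra.smul_def d0 θ).symm⟩
  -- d = u * π ^ n
  obtain ⟨n, u, hu⟩ := IsDiscreteValuationRing.eq_unit_mul_pow_irreducible hd0 hπ
  -- the integral element t with algebraMap t = π^(n+1) * θ
  obtain ⟨t0, ht0⟩ := (IsIntegralClosure.isIntegral_iff (A := R')).mp x.2
  set N := n + 1 with hNdef
  set t : R' := algebraMap R R' ((↑u⁻¹ : R) * π) * t0 with htdef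
  have hu2 : ((↑u⁻¹ : R) * π) * (↑u * π ^ n) = π ^ N := by
    rw [hNdef, pow_succ, mul_mul_mul_comm, Units.inv_mul, one_mul, mul_comm]
  have ht : algebraMap R' K' t = algebraMap R K' (π ^ N) * θ := by
    rw [htdef, map_mul, ← IsScalarTower.algebraMap_apply R R' K', ht0, ← hdx, hu,
      ← mul_assoc, ← map_mul, hu2]
  -- key trace identity in R'
  have hsum : ∑ σ : K' ≃ₐ[K] K', galRestrict R K K' R' σ t = algebraMap R R' (π ^ N) := by
    apply hinj
    rw [map_sum, ← IsScalarTower.algebraMap_apply R R' K']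
    have h1 : ∀ σ : K' ≃ₐ[K] K', algebraMap R' K' (galRestrict R K K' R' σ t)
        = algebraMap R K' (π ^ N) * σ θ := by
      intro σ
      rw [algebraMap_galRestrict_apply, ht, map_mul]
      congr 1
      rw [IsScalarTower.algebraMap_apply R K K', AlgEquiv.commutes]
    rw [Finset.sum_congr rfl (fun σ _ => h1 σ), ← Finset.mul_sum,
      ← trace_eq_sum_automorphisms, hθ, map_one, mul_one]
  refine ⟨N, Nat.le_add_left 1 n, ?_⟩
  -- the cohomology argument
  have key : ∀ f : cocycles₁ (Rep.of ρ), ⇑(π ^ N • f) ∈ coboundaries₁ (Rep.of ρ) := by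
    intro f
    set F : (K' ≃ₐ[K] K') → M' := fun h => f h with hF
    have hco : ∀ g h : K' ≃ₐ[K] K', F (g * h) = ρ g (F h) + F g := fun g h =>
      (mem_cocycles₁_iff (A := Rep.of ρ) (f : (K' ≃ₐ[K] K') → Rep.of ρ)).mp f.2 g h
    set m : M' := ∑ h : K' ≃ₐ[K] K', (galRestrict R K K' R' h t) • (F h) with hm
    have hrec : ∀ g : K' ≃ₐ[K] K', m = ρ g m + π ^ N • F g := by
      intro g
      have hre : m = ∑ h : K' ≃ₐ[K] K',
          (galRestrict R K K' R' (g * h) t) • F (g * h) := by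
        rw [hm]
        exact (Fintype.sum_equiv (Equiv.mulLeft g) _ _ (fun h => rfl)).symm
      calc m = ∑ h : K' ≃ₐ[K] K',
            ((galRestrict R K K' R' (g * h) t) • (ρ g (F h))
              + (galRestrict R K K' R' (g * h) t) • F g) := by
              rw [hre]
              exact Finset.sum_congr rfl (fun h _ => by rw [hco g h, smul_add])
        _ = (∑ h : K' ≃ₐ[K] K', (galRestrict R K K' R' (g * h) t) • (ρ g (F h)))
              + (∑ h : K' ≃ₐ[K] K', galRestrict R K K' R' (g * h) t) • F g := by
              rw [Finset.sum_add_distrib, Finset.sum_smul]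
        _ = ρ g m + π ^ N • F g := by
              congr 1
              · rw [hm, map_sum]
                refine Finset.sum_congr rfl (fun h _ => ?_)
                rw [map_mul (galRestrict R K K' R') g h, AlgEquiv.mul_apply]
                exact (hsemi g _ _).symm
              · have h2 : ∑ h : K' ≃ₐ[K] K', galRestrict R K K' R' (g * h) t
                    = algebraMap R R' (π ^ N) := by
                  rw [← hsum]
                  exact Fintype.sum_equiv (Equiv.mulLeft g) _ _ (fun h => rfl)
                rw [h2, algebraMap_smul]
    refine LinearMap.mem_range.mpr ⟨-m, funext fun g => ?_⟩
    show ρ g (-m) - (-m) = π ^ N • F g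
    rw [map_neg, sub_neg_eq_add, neg_add_eq_sub, sub_eq_iff_eq_add']
    exact hrec g
  intro y
  obtain ⟨f, rfl⟩ := (ModuleCat.epi_iff_surjective (H1π (Rep.of ρ))).1 inferInstance y
  rw [← map_smul, H1π_eq_zero_iff]
  exact key f
end

section
/- Let R ⊂ R' be complete discrete valuation rings with R' totally ramified over R, K'/K Galois with group Γ, and suppose π^r kills H^1(Γ, R') for some r ≥ 0. Then for all n ≥ r, the image of the map (R'/π^n R')^Γ → (R'/π^{n} R')^Γ induced by multiplication by π^r equals π^r · (R/π^n R), i.e., is exactly the image of π^r R under the natural map R/π^n → (R'/π^n)^Γ. -/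
lemma fixed_mem_range
    (R : Type) [CommRing R] [IsDomain R] [IsDiscreteValuationRing R]
    (K : Type) [Field K] [Algebra R K] [IsFractionRing R K]
    (K' : Type) [Field K'] [Algebra K K'] [FiniteDimensional K K'] [IsGalois K K']
    [Algebra R K'] [IsScalarTower R K K']
    (R' : Type) [CommRing R'] [IsDomain R']
    [Algebra R R'] [Algebra R' K'] [IsScalarTower R R' K']
    [IsIntegralClosure R' R K']
    (x : R') (hx : ∀ σ : K' ≃ₐ[K] K', galRestrict R K K' R' σ x = x) :
    ∃ y : R, algebraMap R R' y = x := by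
  have hinj' : Function.Injective (algebraMap R' K') :=
    IsIntegralClosure.algebraMap_injective R' R K'
  set x' : K' := algebraMap R' K' x with hx'
  have hfix : ∀ σ : K' ≃ₐ[K] K', σ x' = x' := fun σ => by
    rw [hx', ← algebraMap_galRestrict_apply R, hx σ]
  have hbot : IntermediateField.fixedField (⊤ : Subgroup (K' ≃ₐ[K] K')) = ⊥ :=
    ((IsGalois.tfae (F := K) (E := K')).out 0 1).mp (inferInstance : IsGalois K K')
  have hmem : x' ∈ IntermediateField.fixedField (⊤ : Subgroup (K' ≃ₐ[K] K')) := by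
    intro g
    exact hfix g
  rw [hbot, IntermediateField.mem_bot] at hmem
  obtain ⟨k, hk⟩ := hmem
  have hxint : IsIntegral R x := IsIntegralClosure.isIntegral R K' x
  have hx'int : IsIntegral R x' := hxint.map (IsScalarTower.toAlgHom R R' K')
  have hkint : IsIntegral R k := by
    rw [← isIntegral_algebraMap_iff (algebraMap K K').injective, hk]
    exact hx'int
  obtain ⟨y, hy⟩ := IsIntegrallyClosed.isIntegral_iff.mp hkint
  refine ⟨y, hinj' ?_⟩
  rw [← IsScalarTower.algebraMap_apply, IsScalarTower.algebraMap_apply R K K', hy, hk]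


/-- Let `R ⊆ R'` be complete discrete valuation rings with `R'` totally
ramified over `R` (the induced map of residue fields is an isomorphism), `K'/K` Galois with
group `Γ` (acting on `R'` via `galRestrict`, and hence on `R'/π^n R'` via the given action
`act`), and suppose `π^r` kills `H¹(Γ, R')` for some `r ≥ 0`.  Then for all `n ≥ r`, the
image of the endomorphism of `(R'/π^n R')^Γ` induced by multiplication by `π^r` is exactly
`π^r · (R/π^n R)`, i.e. the image of `π^r R` under the natural map `R/π^n → (R'/π^n)^Γ`. -/
theorem statement4
    (R : Type) [CommRing R] [IsDomain R] [IsDiscreteValuationRing R]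
    [IsAdicComplete (IsLocalRing.maximalIdeal R) R]
    (K : Type) [Field K] [Algebra R K] [IsFractionRing R K]
    (K' : Type) [Field K'] [Algebra K K'] [FiniteDimensional K K'] [IsGalois K K']
    [Algebra R K'] [IsScalarTower R K K']
    (R' : Type) [CommRing R'] [IsDomain R'] [IsDiscreteValuationRing R']
    [IsAdicComplete (IsLocalRing.maximalIdeal R') R']
    [Algebra R R'] [Algebra R' K'] [IsScalarTower R R' K']
    [IsIntegralClosure R' R K']
    [IsLocalHom (algebraMap R R')]
    -- totally ramified:
    (htot : Function.Bijective (IsLocalRing.ResidueField.map (algebraMap R R')))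
    (π : R) (hπ : Irreducible π)
    -- the natural semilinear action of `Γ` on `R'` and the assumption that `π^r`
    -- kills `H¹(Γ, R')`:
    (ρ : Representation R (K' ≃ₐ[K] K') R')
    (hρ : ∀ (σ : K' ≃ₐ[K] K') (x : R'), ρ σ x = galRestrict R K K' R' σ x)
    (r : ℕ) (hr : ∀ y : groupCohomology (Rep.of ρ) 1, (π ^ r) • y = 0)
    (n : ℕ) (hn : r ≤ n)
    -- the induced action of `Γ` on `R'/π^n R'`:
    (act : (K' ≃ₐ[K] K') →*
      ((R' ⧸ Ideal.span {algebraMap R R' π ^ n}) ≃+* (R' ⧸ Ideal.span {algebraMap R R' π ^ n})))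
    (hact : ∀ (σ : K' ≃ₐ[K] K') (x : R'),
      act σ (Ideal.Quotient.mk _ x) = Ideal.Quotient.mk _ (galRestrict R K K' R' σ x)) :
    {y : R' ⧸ Ideal.span {algebraMap R R' π ^ n} |
        ∃ a, (∀ σ, act σ a = a) ∧
          y = (Ideal.Quotient.mk _ (algebraMap R R' π)) ^ r * a} =
      {y : R' ⧸ Ideal.span {algebraMap R R' π ^ n} |
        ∃ x : R, y = Ideal.Quotient.mk _ (algebraMap R R' (π ^ r * x))} := by
  classical
  have hinjRK' : Function.Injective (algebraMap R K') := by
    rw [IsScalarTower.algebraMap_eq R K K']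
    exact (algebraMap K K').injective.comp (IsFractionRing.injective R K)
  have hinj : Function.Injective (algebraMap R R') := by
    intro a b hab
    apply hinjRK'
    rw [IsScalarTower.algebraMap_apply R R' K', hab, ← IsScalarTower.algebraMap_apply]
  set p : R' := algebraMap R R' π with hp
  have hp0 : p ≠ 0 := fun h =>
    hπ.ne_zero (hinj (show algebraMap R R' π = algebraMap R R' 0 by
      rw [map_zero, ← hp]; exact h))
  have hpn0 : p ^ n ≠ 0 := pow_ne_zero _ hp0
  ext y
  simp only [Set.mem_setOf_eq]
  constructor
  · rintro ⟨a, ha, rfl⟩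
    obtain ⟨α, rfl⟩ := Ideal.Quotient.mk_surjective a
    have hdvd : ∀ σ : K' ≃ₐ[K] K', ∃ v, galRestrict R K K' R' σ α - α = p ^ n * v := by
      intro σ
      have h1 := ha σ
      rw [hact] at h1
      rw [Ideal.Quotient.eq, Ideal.mem_span_singleton] at h1
      obtain ⟨v, hv⟩ := h1
      exact ⟨v, hv⟩
    set u : (K' ≃ₐ[K] K') → R' := fun σ => (hdvd σ).choose with hu_def
    have hu : ∀ σ, galRestrict R K K' R' σ α - α = p ^ n * u σ := fun σ => (hdvd σ).choose_spec
    have key : ∀ g h : K' ≃ₐ[K] K',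
        p ^ n * u (g * h) = p ^ n * (galRestrict R K K' R' g (u h) + u g) := by
      intro g h
      have e1 : galRestrict R K K' R' (g * h) α
          = galRestrict R K K' R' g (galRestrict R K K' R' h α) := by
        rw [map_mul]; rfl
      have e2 : galRestrict R K K' R' g (p ^ n * u h)
          = p ^ n * galRestrict R K K' R' g (u h) := by
        rw [map_mul, hp, ← map_pow, AlgEquiv.commutes, map_pow]
      calc p ^ n * u (g * h) = galRestrict R K K' R' (g * h) α - α := (hu _).symm
        _ = (galRestrict R K K' R' g (galRestrict R K K' R' h α)
              - galRestrict R K K' R' g α) + (galRestrict R K K' R' g α - α) := by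
            rw [e1]; ring
        _ = galRestrict R K K' R' g (galRestrict R K K' R' h α - α)
              + (galRestrict R K K' R' g α - α) := by rw [map_sub]
        _ = galRestrict R K K' R' g (p ^ n * u h) + p ^ n * u g := by rw [hu, hu]
        _ = p ^ n * (galRestrict R K K' R' g (u h) + u g) := by rw [e2]; ring
    have hmem : u ∈ groupCohomology.cocycles₁ (Rep.of ρ) := by
      rw [groupCohomology.mem_cocycles₁_iff]
      intro g h
      apply mul_left_cancel₀ hpn0
      rw [key g h]
      congr 1
      show (galRestrict R K K' R' g (u h) + u g : R') = ρ g (u h) + u g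
      rw [hρ]
    set c : groupCohomology.cocycles₁ (Rep.of ρ) := ⟨u, hmem⟩ with hc
    have h0 : (π ^ r) • (groupCohomology.H1π (Rep.of ρ) c) = 0 := by
      exact hr _
    have hcob : ⇑((π ^ r) • c) ∈ groupCohomology.coboundaries₁ (Rep.of ρ) := by
      rw [← map_smul] at h0
      exact (groupCohomology.H1π_eq_zero_iff _).mp h0
    rw [groupCohomology.coboundaries₁, LinearMap.mem_range] at hcob
    obtain ⟨b, hb⟩ := hcob
    let b' : R' := b
    have hb' : ∀ σ, galRestrict R K K' R' σ b' - b' = algebraMap R R' (π ^ r) * u σ := by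
      intro σ
      have h1 : ρ σ b' - b' = (π ^ r) • (u σ) := by
        have h3 := congrFun hb σ
        rw [groupCohomology.d₀₁_hom_apply] at h3
        exact h3
      rw [hρ] at h1
      rw [h1, Algebra.smul_def]
    set w : R' := α - algebraMap R R' (π ^ (n - r)) * b' with hw
    have hwfix : ∀ σ, galRestrict R K K' R' σ w = w := by
      intro σ
      have e3 : galRestrict R K K' R' σ w
          = galRestrict R K K' R' σ α
            - algebraMap R R' (π ^ (n - r)) * galRestrict R K K' R' σ b' := by
        rw [hw, map_sub, map_mul, AlgEquiv.commutes]
      have e4 : galRestrict R K K' R' σ w - w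
          = (galRestrict R K K' R' σ α - α)
            - algebraMap R R' (π ^ (n - r)) * (galRestrict R K K' R' σ b' - b') := by
        rw [e3, hw]; ring
      have e5 : galRestrict R K K' R' σ w - w = 0 := by
        rw [e4, hu σ, hb' σ, hp, ← mul_assoc, ← map_mul, ← pow_add,
          Nat.sub_add_cancel hn, map_pow, sub_self]
      exact sub_eq_zero.mp e5
    obtain ⟨x, hx⟩ := fixed_mem_range R K K' R' w hwfix
    refine ⟨x, ?_⟩
    have e8 : (Ideal.Quotient.mk (Ideal.span {p ^ n}) p) ^ r
        * Ideal.Quotient.mk (Ideal.span {p ^ n}) α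
        = Ideal.Quotient.mk (Ideal.span {p ^ n}) (p ^ r * α) := by
      rw [map_mul, map_pow]
    rw [e8, Ideal.Quotient.eq, Ideal.mem_span_singleton]
    refine ⟨b', ?_⟩
    have e6 : algebraMap R R' (π ^ r * x) = p ^ r * (α - p ^ (n - r) * b') := by
      rw [map_mul, map_pow, hx, hw, map_pow]
    rw [e6, mul_sub, sub_sub_cancel, ← mul_assoc, ← pow_add, Nat.add_sub_cancel' hn]
  · rintro ⟨x, rfl⟩
    refine ⟨Ideal.Quotient.mk _ (algebraMap R R' x), fun σ => ?_, ?_⟩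
    · rw [hact]
      congr 1
      exact AlgEquiv.commutes (galRestrict R K K' R' σ) x
    · rw [map_mul, map_pow, map_mul, map_pow]
end

section
/- Let K'/K be a finite Galois extension with group Γ and valuation rings R ⊂ R', and let (M', φ_σ) be a Γ-descent module with M' finite free over R'. If M' is an effective descent module at π^d-torsion level for a suitable constant d depending only on R'/R (specifically: M'/π^d M' admits an effective descent to a finite free R/π^d-module), and if π^{d/2} kills H^1(Γ, M'), then M' itself admits an effective descent, namely M = (M')^Γ, and the natural map (M')^Γ ⊗_R R' → M' is an isomorphism. -/
private lemma aux_mem_smul_top {R' M' : Type} [CommRing R'] [AddCommGroup M'] [Module R' M']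
    (q : R') (m : M') :
    m ∈ (Ideal.span {q} • (⊤ : Submodule R' M')) ↔ ∃ y : M', q • y = m := by
  constructor
  · intro h
    refine Submodule.smul_induction_on h (fun r hr m _ => ?_) (fun x y hx hy => ?_)
    · obtain ⟨t, ht⟩ := Ideal.mem_span_singleton'.1 hr
      exact ⟨t • m, by rw [smul_comm, ← mul_smul, ht]⟩
    · obtain ⟨a, ha⟩ := hx; obtain ⟨b, hb⟩ := hy
      exact ⟨a + b, by rw [smul_add, ha, hb]⟩
  · rintro ⟨y, rfl⟩
    exact Submodule.smul_mem_smul (Ideal.mem_span_singleton_self q) trivial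

private lemma aux_quot_basis {R' M' : Type} [CommRing R'] [AddCommGroup M'] [Module R' M']
    {n : ℕ} (c : Module.Basis (Fin n) R' M') (q : R') :
    ∃ bQ : Module.Basis (Fin n) (R' ⧸ Ideal.span {q})
      (M' ⧸ (Ideal.span {q} • (⊤ : Submodule R' M'))), ∀ i,
      bQ i = Submodule.Quotient.mk (c i) := by
  classical
  set I : Ideal R' := Ideal.span {q} with hI
  have hli : LinearIndependent (R' ⧸ I)
      (fun i : Fin n => (Submodule.Quotient.mk (c i) : M' ⧸ (I • (⊤ : Submodule R' M')))) := by
    rw [Fintype.linearIndependent_iff]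
    intro g hg i
    choose gg hgg using fun i => Ideal.Quotient.mk_surjective (g i)
    have hsum : (Submodule.Quotient.mk (∑ i, gg i • c i) : M' ⧸ (I • (⊤ : Submodule R' M'))) = 0 := by
      rw [← hg]
      have hms : (Submodule.Quotient.mk (∑ i, gg i • c i) : M' ⧸ (I • (⊤ : Submodule R' M')))
          = ∑ i, Submodule.Quotient.mk (gg i • c i) := map_sum (Submodule.mkQ _) _ _
      rw [hms]
      exact Finset.sum_congr rfl (fun i _ => by rw [← hgg]; rfl)
    rw [Submodule.Quotient.mk_eq_zero, aux_mem_smul_top] at hsum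
    obtain ⟨y, hy⟩ := hsum
    have hyrepr : q • y = ∑ j, (q * c.repr y j) • c j := by
      conv_lhs => rw [← c.sum_repr y]
      rw [Finset.smul_sum]
      exact Finset.sum_congr rfl (fun j _ => by rw [← mul_smul])
    have hcoord : gg i = q * c.repr y i := by
      have h1 := hy.symm.trans hyrepr
      have h2 : c.repr (∑ j, gg j • c j) i = c.repr (∑ j, (q * c.repr y j) • c j) i := by
        rw [h1]
      simp only [Module.Basis.repr_sum_self] at h2
      exact h2
    rw [← hgg, hcoord]
    exact (Ideal.Quotient.eq_zero_iff_mem).2 (Ideal.mul_mem_right _ _ (Ideal.mem_span_singleton_self q))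
  have hsp : ⊤ ≤ Submodule.span (R' ⧸ I)
      (Set.range (fun i : Fin n => (Submodule.Quotient.mk (c i) : M' ⧸ (I • (⊤ : Submodule R' M'))))) := by
    rintro z -
    obtain ⟨m, rfl⟩ := Submodule.Quotient.mk_surjective _ z
    have h3 : (Submodule.Quotient.mk m : M' ⧸ (I • (⊤ : Submodule R' M')))
        = ∑ i, (Ideal.Quotient.mk I (c.repr m i)) • Submodule.Quotient.mk (c i) := by
      conv_lhs => rw [← c.sum_repr m]
      have hms : (Submodule.Quotient.mk (∑ i, c.repr m i • c i) : M' ⧸ (I • (⊤ : Submodule R' M')))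
          = ∑ i, Submodule.Quotient.mk (c.repr m i • c i) := map_sum (Submodule.mkQ _) _ _
      rw [hms]
      exact Finset.sum_congr rfl (fun i _ => rfl)
    rw [h3]
    exact Submodule.sum_mem _ (fun i _ => Submodule.smul_mem _ _ (Submodule.subset_span ⟨i, rfl⟩))
  exact ⟨Module.Basis.mk hli hsp, fun i => by rw [Module.Basis.mk_apply]⟩

private lemma aux_basis_of_gen {R' M' : Type} [CommRing R'] [IsNoetherianRing R']
    [AddCommGroup M'] [Module R' M'] [Module.Finite R' M']
    {k : ℕ} (cb : Module.Basis (Fin k) R' M') (v : Fin k → M')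
    (hsp : ⊤ ≤ Submodule.span R' (Set.range v)) :
    ∃ bM : Module.Basis (Fin k) R' M', ∀ i, bM i = v i := by
  classical
  let φ : (Fin k → R') →ₗ[R'] M' := Fintype.linearCombination R' v
  have hφsurj : Function.Surjective φ := by
    rw [← LinearMap.range_eq_top, Fintype.range_linearCombination]
    exact top_le_iff.1 hsp
  let ψ : (Fin k → R') →ₗ[R'] (Fin k → R') := (cb.equivFun : M' →ₗ[R'] (Fin k → R')).comp φ
  have hψsurj : Function.Surjective ψ := (LinearEquiv.surjective cb.equivFun).comp hφsurj
  have hψinj : Function.Injective ψ :=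
    OrzechProperty.injective_of_surjective_endomorphism ψ hψsurj
  have hφinj : Function.Injective φ := by
    intro a b hab
    exact hψinj (by simp [ψ, LinearMap.comp_apply, hab])
  have hli : LinearIndependent R' v := by
    rw [Fintype.linearIndependent_iff]
    intro g hg
    have h1 : φ g = φ 0 := by
      rw [map_zero, ← hg, Fintype.linearCombination_apply]
    have h2 := hφinj h1
    intro i; rw [h2]; rfl
  exact ⟨Module.Basis.mk hli hsp, fun i => Module.Basis.mk_apply _ _ _⟩

private lemma aux_nakayama {R' M' : Type} [CommRing R'] [IsLocalRing R']
    [AddCommGroup M'] [Module R' M'] [Module.Finite R' M']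
    (T : Submodule R' M')
    (h : ⊤ ≤ T ⊔ (IsLocalRing.maximalIdeal R') • (⊤ : Submodule R' M')) :
    ⊤ ≤ T :=
  Submodule.le_of_le_smul_of_le_jacobson_bot Module.Finite.fg_top
    (IsLocalRing.maximalIdeal_le_jacobson ⊥) h

private lemma aux_rank_eq {A Q : Type} [CommRing A] [Nontrivial A] [AddCommGroup Q] [Module A Q]
    {k n : ℕ} (b : Module.Basis (Fin k) A Q) (b' : Module.Basis (Fin n) A Q) : k = n := by
  have := Fintype.card_congr (b.indexEquiv b')
  simpa using this

/-- Let `K'/K` be a finite Galois extension with group `Γ`, valuation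
rings `R ⊆ R'`, and let `(M', ρ)` be a `Γ`-descent module with `M'` finite free over `R'`
(`ρ` semilinear over the Galois action on `R'`).  Suppose that, for `d = 2s`,
`M'/π^d M'` admits an effective descent to a finite free `R/π^d`-module (equivalently, it
has a basis over `R'/π^d` consisting of `Γ`-invariant elements), and that `π^(d/2) = π^s`
kills `H¹(Γ, M')`.  Then `M'` itself admits an effective descent, namely `M = (M')^Γ`:
the natural map `(M')^Γ ⊗_R R' → M'` is an isomorphism (i.e. the inclusion of the
invariants realizes `M'` as a base change). -/
theorem statement6
    (R : Type) [CommRing R] [IsDomain R] [IsDiscreteValuationRing R]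
    (K : Type) [Field K] [Algebra R K] [IsFractionRing R K]
    (K' : Type) [Field K'] [Algebra K K'] [FiniteDimensional K K'] [IsGalois K K']
    [Algebra R K'] [IsScalarTower R K K']
    (R' : Type) [CommRing R'] [IsDomain R'] [IsDiscreteValuationRing R']
    [Algebra R R'] [Algebra R' K'] [IsScalarTower R R' K']
    [IsIntegralClosure R' R K']
    (π : R) (hπ : Irreducible π)
    (M' : Type) [AddCommGroup M'] [Module R' M'] [Module R M'] [IsScalarTower R R' M']
    [Module.Free R' M'] [Module.Finite R' M']
    (ρ : Representation R (K' ≃ₐ[K] K') M')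
    (hsemi : ∀ (σ : K' ≃ₐ[K] K') (x : R') (m : M'),
      ρ σ (x • m) = (galRestrict R K K' R' σ x) • (ρ σ m))
    (s : ℕ) (hs : 1 ≤ s)
    -- `π^(d/2) = π^s` kills `H¹(Γ, M')`:
    (hH1 : ∀ y : groupCohomology (Rep.of ρ) 1, (π ^ s) • y = 0)
    -- the induced `Γ`-action on `M'/π^(2s) M'`:
    (ρQ : Representation R (K' ≃ₐ[K] K')
      (M' ⧸ (Ideal.span {algebraMap R R' π ^ (2 * s)} • (⊤ : Submodule R' M'))))
    (hρQ : ∀ (σ : K' ≃ₐ[K] K') (m : M'),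
      ρQ σ (Submodule.Quotient.mk m) = Submodule.Quotient.mk (ρ σ m))
    -- effective descent of `M'/π^(2s) M'` to a finite free `R/π^(2s)`-module: it has a
    -- basis over `R'/π^(2s)` consisting of `Γ`-invariant elements
    (hdesc : ∃ (k : ℕ) (b : Module.Basis (Fin k) (R' ⧸ Ideal.span {algebraMap R R' π ^ (2 * s)})
        (M' ⧸ (Ideal.span {algebraMap R R' π ^ (2 * s)} • (⊤ : Submodule R' M')))),
      ∀ (j : Fin k) (σ : K' ≃ₐ[K] K'), ρQ σ (b j) = b j) :
    IsBaseChange R'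
      (Submodule.subtype (⨅ σ : K' ≃ₐ[K] K', LinearMap.eqLocus (ρ σ) LinearMap.id)) := by
  classical
  -- notation
  set p : R' := algebraMap R R' π with hp
  -- injectivity of the various maps
  have hinjRR' : Function.Injective (algebraMap R R') := by
    have h1 : Function.Injective (algebraMap R K') := by
      rw [IsScalarTower.algebraMap_eq R K K']
      exact (algebraMap K K').injective.comp (IsFractionRing.injective R K)
    rw [IsScalarTower.algebraMap_eq R R' K'] at h1
    exact Function.Injective.of_comp h1
  have hp0 : p ≠ 0 := fun h0 => hπ.ne_zero (hinjRR' (by rw [map_zero]; exact h0))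
  -- p is not a unit in R'
  have hpu : ¬ IsUnit p := by
    intro h
    apply hπ.not_isUnit
    obtain ⟨u, hu⟩ := h
    have hπK : algebraMap R K π ≠ 0 :=
      fun h0 => hπ.ne_zero (IsFractionRing.injective R K (by simpa using h0))
    have ht0 : algebraMap R K' π ≠ 0 := by
      rw [IsScalarTower.algebraMap_apply R K K']
      simpa using hπK
    have ht1 : algebraMap R K' π * algebraMap R' K' ((u⁻¹ : R'ˣ) : R') = 1 := by
      rw [IsScalarTower.algebraMap_apply R R' K', ← map_mul,
        show (algebraMap R R' π) = (u : R') from hu.symm, Units.mul_inv, map_one]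
    have ht2 : algebraMap R K' π * algebraMap K K' ((algebraMap R K π)⁻¹) = 1 := by
      rw [IsScalarTower.algebraMap_apply R K K', ← map_mul, mul_inv_cancel₀ hπK, map_one]
    have h1 : algebraMap R' K' ((u⁻¹ : R'ˣ) : R') =
        algebraMap K K' ((algebraMap R K π)⁻¹) :=
      mul_left_cancel₀ ht0 (ht1.trans ht2.symm)
    have hint : IsIntegral R ((algebraMap R K π)⁻¹) := by
      rw [← isIntegral_algebraMap_iff (algebraMap K K').injective, ← h1]
      exact IsIntegralClosure.isIntegral_iff.2 ⟨_, rfl⟩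
    obtain ⟨r, hr⟩ := IsIntegrallyClosed.isIntegral_iff.1 hint
    refine IsUnit.of_mul_eq_one (a := π) r ?_
    have h2 : algebraMap R K (π * r) = 1 := by
      rw [map_mul, hr, mul_inv_cancel₀ hπK]
    exact IsFractionRing.injective R K (by simpa using h2)
  -- Galois-fixed elements of R' come from R
  have hfixring : ∀ a : R', (∀ σ : K' ≃ₐ[K] K', galRestrict R K K' R' σ a = a) →
      ∃ r : R, algebraMap R R' r = a := by
    intro a ha
    have hff : IntermediateField.fixedField (⊤ : Subgroup (K' ≃ₐ[K] K')) = ⊥ :=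
      ((IsGalois.tfae (F := K) (E := K')).out 0 1).mp ‹IsGalois K K'›
    have hx : algebraMap R' K' a ∈ IntermediateField.fixedField (⊤ : Subgroup (K' ≃ₐ[K] K')) := by
      rintro ⟨σ, -⟩
      show σ • algebraMap R' K' a = algebraMap R' K' a
      rw [AlgEquiv.smul_def, ← algebraMap_galRestrict_apply R, ha σ]
    rw [hff, IntermediateField.mem_bot] at hx
    obtain ⟨c, hc⟩ := hx
    have hci : IsIntegral R c := by
      rw [← isIntegral_algebraMap_iff (algebraMap K K').injective, hc]
      exact IsIntegralClosure.isIntegral_iff.2 ⟨a, rfl⟩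
    obtain ⟨r, hr⟩ := IsIntegrallyClosed.isIntegral_iff.1 hci
    refine ⟨r, IsIntegralClosure.algebraMap_injective R' R K' ?_⟩
    rw [← IsScalarTower.algebraMap_apply, IsScalarTower.algebraMap_apply R K K', hr, hc]
  -- Step A: `π^s` kills 1-cocycles up to coboundaries
  have key : ∀ c : (K' ≃ₐ[K] K') → M', (∀ g h, c (g * h) = ρ g (c h) + c g) →
      ∃ x : M', ∀ g, π ^ s • c g = ρ g x - x := by
    intro c hc
    have hcoc : c ∈ groupCohomology.cocycles₁ (Rep.of ρ) :=
      (groupCohomology.mem_cocycles₁_iff (A := Rep.of ρ) c).2 hc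
    have h2 : ⇑(π ^ s • (⟨c, hcoc⟩ : groupCohomology.cocycles₁ (Rep.of ρ)))
        ∈ groupCohomology.coboundaries₁ (Rep.of ρ) := by
      rw [← groupCohomology.H1π_eq_zero_iff]
      have h3 := hH1 (groupCohomology.H1π (Rep.of ρ) ⟨c, hcoc⟩)
      exact (LinearMap.map_smul (groupCohomology.H1π (Rep.of ρ)).hom _ _).trans h3
    obtain ⟨x, hx⟩ := h2
    refine ⟨x, fun g => ?_⟩
    have h3 := congrFun hx g
    exact h3.symm
  -- Step B: lifting invariants modulo `π^(2s)` to honest invariants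
  have liftinv : ∀ m : M', (∀ σ : K' ≃ₐ[K] K',
      ρ σ m - m ∈ (Ideal.span {p ^ (2*s)} • (⊤ : Submodule R' M'))) →
      ∃ m'' x : M', (∀ σ, ρ σ m'' = m'') ∧ m - m'' = π ^ s • x := by
    intro m hm
    choose c hc using fun σ => (aux_mem_smul_top _ _).1 (hm σ)
    have hq0 : p ^ (2*s) ≠ 0 := pow_ne_zero _ hp0
    have hinj : Function.Injective (fun y : M' => p ^ (2*s) • y) :=
      smul_right_injective M' hq0
    have hfixp : ∀ σ : K' ≃ₐ[K] K', galRestrict R K K' R' σ (p ^ (2*s)) = p ^ (2*s) :=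
      fun σ => by rw [map_pow, hp, AlgEquiv.commutes]
    have hcoc : ∀ g h, c (g * h) = ρ g (c h) + c g := by
      intro g h
      apply hinj
      show p ^ (2*s) • c (g*h) = p ^ (2*s) • (ρ g (c h) + c g)
      have e1 : ρ (g*h) m - m = ρ g (ρ h m - m) + (ρ g m - m) := by
        rw [map_sub, ← Module.End.mul_apply, ← map_mul]
        abel
      rw [hc (g*h), e1, ← hc h, ← hc g, hsemi g, hfixp g, smul_add]
    obtain ⟨x, hx⟩ := key c hcoc
    refine ⟨m - π ^ s • x, x, fun σ => ?_, by abel⟩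
    have e2 : ρ σ (m - π ^ s • x) - (m - π ^ s • x)
        = (ρ σ m - m) - π ^ s • (ρ σ x - x) := by
      rw [map_sub, map_smul, smul_sub]
      abel
    have e3 : ρ σ (m - π ^ s • x) - (m - π ^ s • x) = 0 := by
      rw [e2, ← hx σ, ← hc σ, smul_smul, ← pow_add, ← algebraMap_smul R' (π ^ (s+s)), map_pow]
      have h2s : s + s = 2 * s := by ring
      rw [h2s, sub_self]
    exact sub_eq_zero.1 e3
  -- get the invariant basis mod `π^(2s)` and lift it
  obtain ⟨k, b, hb⟩ := hdesc
  choose m hmmk using fun j : Fin k => Submodule.Quotient.mk_surjective _ (b j)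
  have hm : ∀ (j : Fin k) (σ : K' ≃ₐ[K] K'),
      ρ σ (m j) - m j ∈ (Ideal.span {p ^ (2*s)} • (⊤ : Submodule R' M')) := by
    intro j σ
    rw [← Submodule.Quotient.mk_eq_zero (p := Ideal.span {p ^ (2*s)} • (⊤ : Submodule R' M')),
      Submodule.Quotient.mk_sub]
    rw [← hρQ σ (m j), hmmk j, hb j σ, sub_self]
  choose m'' x hinv hdiff using fun j : Fin k => liftinv (m j) (hm j)
  -- the lifted elements generate M'
  have hItop : Ideal.span {p ^ (2*s)} ≠ (⊤ : Ideal R') := by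
    intro h
    exact hpu ((isUnit_pow_iff (by omega : 2*s ≠ 0)).1
      (Ideal.span_singleton_eq_top.1 h))
  have hmm : IsLocalRing R' := inferInstance
  have hpmem : p ∈ IsLocalRing.maximalIdeal R' := hpu
  have hpsmem : p ^ s ∈ IsLocalRing.maximalIdeal R' := by
    have hps : p ^ s = p ^ (s - 1) * p := by
      rw [← pow_succ]
      congr 1
      omega
    rw [hps]
    exact Ideal.mul_mem_left _ _ hpmem
  have hIleM : Ideal.span {p ^ (2*s)} ≤ IsLocalRing.maximalIdeal R' := by
    rw [Ideal.span_le, Set.singleton_subset_iff]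
    have hp2s : p ^ (2*s) = p ^ (2*s - 1) * p := by
      rw [← pow_succ]
      congr 1
      omega
    rw [hp2s]
    exact Ideal.mul_mem_left _ _ hpmem
  have hTtop : ⊤ ≤ Submodule.span R' (Set.range m'') := by
    apply aux_nakayama
    rintro z -
    -- coordinates of `z` mod `π^(2s)`
    choose a ha using fun i : Fin k =>
      Ideal.Quotient.mk_surjective (b.repr (Submodule.Quotient.mk z) i)
    have hz : (Submodule.Quotient.mk z : M' ⧸ (Ideal.span {p ^ (2*s)} • (⊤ : Submodule R' M')))
        = ∑ i, Ideal.Quotient.mk (Ideal.span {p ^ (2*s)}) (a i) • b i := by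
      rw [← b.sum_repr (Submodule.Quotient.mk z)]
      exact Finset.sum_congr rfl (fun i _ => by rw [ha])
    have hzsum : (Submodule.Quotient.mk z :
        M' ⧸ (Ideal.span {p ^ (2*s)} • (⊤ : Submodule R' M')))
        = Submodule.Quotient.mk (∑ i, a i • m i) := by
      rw [hz]
      have hms : (Submodule.Quotient.mk (∑ i, a i • m i) :
          M' ⧸ (Ideal.span {p ^ (2*s)} • (⊤ : Submodule R' M')))
          = ∑ i, Submodule.Quotient.mk (a i • m i) := map_sum (Submodule.mkQ _) _ _
      rw [hms]
      exact Finset.sum_congr rfl (fun i _ => by rw [← hmmk i]; rfl)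
    have hzmem : z - ∑ i, a i • m i ∈
        (Ideal.span {p ^ (2*s)} • (⊤ : Submodule R' M')) :=
      (Submodule.Quotient.eq _).1 hzsum
    -- decompose z
    have hdecomp : z = (∑ i, a i • m'' i)
        + ((z - ∑ i, a i • m i) + ∑ i, a i • (π ^ s • x i)) := by
      have : ∀ i : Fin k, a i • m i = a i • m'' i + a i • (π ^ s • x i) := by
        intro i
        rw [← smul_add]
        congr 1
        have := hdiff i
        rw [← this]
        abel
      rw [Finset.sum_congr rfl (fun i _ => this i), Finset.sum_add_distrib]
      abel
    rw [hdecomp]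
    refine Submodule.add_mem_sup (Submodule.sum_mem _ (fun i _ =>
      Submodule.smul_mem _ _ (Submodule.subset_span ⟨i, rfl⟩))) ?_
    refine Submodule.add_mem _ ?_ ?_
    · exact Submodule.smul_mono_left hIleM hzmem
    · refine Submodule.sum_mem _ (fun i _ => ?_)
      have : a i • (π ^ s • x i) = (p ^ s) • (a i • x i) := by
        rw [smul_comm, ← algebraMap_smul R' (π ^ s) (a i • x i), map_pow]
      rw [this]
      exact Submodule.smul_mem_smul hpsmem trivial
  -- rank equality `k = finrank R' M'`
  have hnontriv : Nontrivial (R' ⧸ Ideal.span {p ^ (2*s)}) := by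
    exact Submodule.Quotient.nontrivial_iff.mpr hItop
  obtain ⟨bQ, hbQ⟩ := aux_quot_basis (Module.finBasis R' M') (p ^ (2*s))
  have hkn : k = Module.finrank R' M' := aux_rank_eq b bQ
  -- a basis of `M'` given by invariant elements
  obtain ⟨bM, hbM⟩ := aux_basis_of_gen
    ((Module.finBasis R' M').reindex (finCongr hkn.symm)) m'' hTtop
  -- the invariants
  set N : Submodule R M' := ⨅ σ : K' ≃ₐ[K] K', LinearMap.eqLocus (ρ σ) LinearMap.id with hN
  have hmemN : ∀ z : M', z ∈ N ↔ ∀ σ : K' ≃ₐ[K] K', ρ σ z = z := by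
    intro z
    simp only [hN, Submodule.mem_iInf, LinearMap.mem_eqLocus, LinearMap.id_coe, id_eq]
  have hm''N : ∀ j, m'' j ∈ N := fun j => (hmemN _).2 (hinv j)
  -- coordinates of invariant elements lie in R
  have hcoords : ∀ z : M', z ∈ N → ∃ r : Fin k → R,
      z = ∑ j, algebraMap R R' (r j) • m'' j := by
    intro z hz
    have hzrep : z = ∑ j, bM.repr z j • m'' j := by
      conv_lhs => rw [← bM.sum_repr z]
      exact Finset.sum_congr rfl (fun j _ => by rw [hbM])
    have hfixcoord : ∀ j σ, galRestrict R K K' R' σ (bM.repr z j) = bM.repr z j := by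
      intro j σ
      have h1 : ρ σ z = ∑ i, galRestrict R K K' R' σ (bM.repr z i) • m'' i := by
        conv_lhs => rw [hzrep]
        rw [map_sum]
        exact Finset.sum_congr rfl (fun i _ => by rw [hsemi, hinv i σ])
      have h2 : (∑ i, galRestrict R K K' R' σ (bM.repr z i) • m'' i) = z := by
        rw [← h1]
        exact (hmemN z).1 hz σ
      have h3 : (∑ i, galRestrict R K K' R' σ (bM.repr z i) • bM i)
          = ∑ i, bM.repr z i • bM i := by
        calc (∑ i, galRestrict R K K' R' σ (bM.repr z i) • bM i)
            = ∑ i, galRestrict R K K' R' σ (bM.repr z i) • m'' i :=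
              Finset.sum_congr rfl (fun i _ => by rw [hbM])
          _ = z := h2
          _ = ∑ i, bM.repr z i • m'' i := hzrep
          _ = ∑ i, bM.repr z i • bM i :=
              Finset.sum_congr rfl (fun i _ => by rw [hbM])
      have h5 : bM.repr (∑ i, galRestrict R K K' R' σ (bM.repr z i) • bM i) j
          = bM.repr (∑ i, bM.repr z i • bM i) j := by rw [h3]
      simpa only [Module.Basis.repr_sum_self] using h5
    choose r hr using fun j => hfixring (bM.repr z j) (hfixcoord j)
    refine ⟨r, ?_⟩
    rw [hzrep]
    exact Finset.sum_congr rfl (fun j _ => by rw [hr])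
  -- conclude via the universal property of base change
  apply IsBaseChange.of_lift_unique
  intro Q₀ _ _ _ _ g
  let nv : Fin k → N := fun j => ⟨m'' j, hm''N j⟩
  let g' : M' →ₗ[R'] Q₀ := bM.constr ℕ (fun j => g (nv j))
  have hg'basis : ∀ j, g' (m'' j) = g (nv j) := by
    intro j
    rw [← hbM j]
    exact bM.constr_basis ℕ _ j
  have hcomp : ∀ z : N, g' (z : M') = g z := by
    intro z
    obtain ⟨r, hr⟩ := hcoords (z : M') z.2
    have hzN : z = ∑ j, r j • nv j := by
      apply Subtype.ext
      have hcoe : ((∑ j, r j • nv j : N) : M') = ∑ j, r j • (m'' j) := by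
        rw [AddSubmonoidClass.coe_finset_sum]
        exact Finset.sum_congr rfl (fun j _ => rfl)
      rw [hcoe, hr]
      exact Finset.sum_congr rfl (fun j _ => by rw [algebraMap_smul])
    calc g' (z : M') = g' (∑ j, algebraMap R R' (r j) • m'' j) := by rw [hr]
      _ = ∑ j, algebraMap R R' (r j) • g' (m'' j) := by
          rw [map_sum]
          exact Finset.sum_congr rfl (fun j _ => by rw [map_smul])
      _ = ∑ j, r j • g (nv j) := by
          exact Finset.sum_congr rfl (fun j _ => by rw [hg'basis, algebraMap_smul])
      _ = g (∑ j, r j • nv j) := by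
          rw [map_sum]
          exact Finset.sum_congr rfl (fun j _ => by rw [map_smul])
      _ = g z := by rw [← hzN]
  refine ⟨g', ?_, ?_⟩
  · apply LinearMap.ext
    intro z
    exact hcomp z
  · intro g'' hg''
    apply Module.Basis.ext bM
    intro j
    rw [hbM j]
    have h6 : g'' (m'' j) = g (nv j) := by
      have := congrArg (fun (f : N →ₗ[R] Q₀) => f (nv j)) hg''
      exact this
    rw [h6, ← hg'basis j]
end

section
/- A short exact sequence 0 → M'_1 → M'_2 → M'_3 → 0 of Γ-descent modules over R', with each M'_i finite free over R', admits an effective descent to a short exact sequence of R-modules if and only if each (M'_i, φ_i) individually admits an effective descent. -/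
/-- A `Γ`-descent module `(M', ρ)` over `R'` admits an *effective descent* to `R`:
there is an `R`-submodule `N` of `M'` consisting of `Γ`-invariant elements such that
the natural map `N ⊗_R R' → M'` is an isomorphism (i.e. the inclusion of `N` realizes
`M'` as the base change of `N` along `R → R'`). -/
def HasEffectiveDescent (R : Type) [CommRing R] (R' : Type) [CommRing R'] [Algebra R R']
    (Γ : Type) [Monoid Γ]
    (M' : Type) [AddCommGroup M'] [Module R' M'] [Module R M'] [IsScalarTower R R' M']
    (ρ : Representation R Γ M') : Prop :=
  ∃ N : Submodule R M', (∀ σ : Γ, ∀ n ∈ N, ρ σ n = n) ∧ IsBaseChange R' N.subtype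

section AuxDescent
set_option linter.unusedSectionVars false
variable (R : Type) [CommRing R] [IsDomain R] [IsDiscreteValuationRing R]
    (K : Type) [Field K] [Algebra R K] [IsFractionRing R K]
    (K' : Type) [Field K'] [Algebra K K'] [FiniteDimensional K K'] [IsGalois K K']
    [Algebra R K'] [IsScalarTower R K K']
    (R' : Type) [CommRing R'] [IsDomain R'] [Algebra R R'] [Algebra R' K'] [IsScalarTower R R' K']
    [IsIntegralClosure R' R K']

/-- An element of `R'` fixed by all of `Gal(K'/K)` lies in `R`. -/
private lemma aux_fixed_mem (a : R') (ha : ∀ σ : K' ≃ₐ[K] K', galRestrict R K K' R' σ a = a) :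
    ∃ r : R, algebraMap R R' r = a := by
  set x : K' := algebraMap R' K' a with hx
  have hσ : ∀ σ : K' ≃ₐ[K] K', σ x = x := by
    intro σ
    rw [hx, ← algebraMap_galRestrict_apply R σ a, ha σ]
  have hfix := ((IsGalois.tfae (F := K) (E := K')).out 0 1).mp ‹IsGalois K K'›
  have hxbot : x ∈ (⊥ : IntermediateField K K') := by
    rw [← hfix]
    exact fun g => hσ g.1
  rw [IntermediateField.mem_bot] at hxbot
  obtain ⟨k, hk⟩ := hxbot
  have hint : IsIntegral R x := by
    have : IsIntegral R a := IsIntegralClosure.isIntegral R K' a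
    exact IsIntegral.map (IsScalarTower.toAlgHom R R' K') this
  have hkint : IsIntegral R k := by
    rw [← isIntegral_algebraMap_iff (algebraMap K K').injective, hk]
    exact hint
  obtain ⟨r, hr⟩ := IsIntegrallyClosed.isIntegral_iff.mp hkint
  refine ⟨r, IsIntegralClosure.algebraMap_injective R' R K' ?_⟩
  rw [← IsScalarTower.algebraMap_apply, IsScalarTower.algebraMap_apply R K K', hr, hk]

include K K' in
/-- `R` is an `R`-module direct summand of `R'`: there is a linear retraction. -/
lemma aux_retraction : ∃ π : R' →ₗ[R] R, ∀ r : R, π (algebraMap R R' r) = r := by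
  haveI := IsIntegralClosure.finite R K K' R'
  have hinjK' : Function.Injective (algebraMap R K') := by
    rw [IsScalarTower.algebraMap_eq R K K']
    exact (algebraMap K K').injective.comp (IsFractionRing.injective R K)
  have hinj : Function.Injective (algebraMap R R') := by
    intro x y h
    apply hinjK'
    rw [IsScalarTower.algebraMap_apply R R' K', h, ← IsScalarTower.algebraMap_apply]
  set L : R →ₗ[R] R' := Algebra.linearMap R R' with hL
  set Q := R' ⧸ LinearMap.range L with hQ
  haveI : Module.Finite R Q := Module.Finite.quotient R _
  haveI : NoZeroSMulDivisors R Q := by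
    refine ⟨fun {x} {q} hxq => ?_⟩
    by_cases hx : x = 0
    · exact Or.inl hx
    refine Or.inr ?_
    obtain ⟨a, rfl⟩ := Submodule.Quotient.mk_surjective _ q
    rw [← Submodule.Quotient.mk_smul, Submodule.Quotient.mk_eq_zero] at hxq
    rw [Submodule.Quotient.mk_eq_zero]
    obtain ⟨r, hr⟩ := hxq
    simp only [hL, Algebra.linearMap_apply] at hr
    -- `x • a = algebraMap R R' r`; show `a` is in the image of `R`.
    have hk : algebraMap R' K' a = algebraMap K K' (algebraMap R K r / algebraMap R K x) := by
      have hx' : algebraMap R K' x ≠ 0 := fun h => hx (hinjK' (by rw [h, map_zero]))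
      have key : algebraMap R K' x * algebraMap R' K' a = algebraMap R K' r := by
        rw [IsScalarTower.algebraMap_apply R R' K', IsScalarTower.algebraMap_apply R R' K' r,
          ← map_mul, ← Algebra.smul_def, ← hr]
      rw [map_div₀, ← IsScalarTower.algebraMap_apply R K K', ← IsScalarTower.algebraMap_apply R K K',
        eq_div_iff hx', mul_comm]
      exact key
    have hint : IsIntegral R (algebraMap R K (r) / algebraMap R K x) := by
      rw [← isIntegral_algebraMap_iff (algebraMap K K').injective, ← hk]
      exact IsIntegral.map (IsScalarTower.toAlgHom R R' K') (IsIntegralClosure.isIntegral R K' a)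
    obtain ⟨s, hs⟩ := IsIntegrallyClosed.isIntegral_iff.mp hint
    refine ⟨s, ?_⟩
    apply IsIntegralClosure.algebraMap_injective R' R K'
    simp only [hL, Algebra.linearMap_apply]
    rw [← IsScalarTower.algebraMap_apply, IsScalarTower.algebraMap_apply R K K', hs, ← hk]
  haveI : Module.Free R Q := Module.free_of_finite_type_torsion_free'
  obtain ⟨s, hs⟩ := Module.projective_lifting_property (LinearMap.range L).mkQ LinearMap.id
    (Submodule.mkQ_surjective _)
  -- `a - s (mkQ a)` lies in the range of `L`
  have hmem : ∀ a : R', a - s ((LinearMap.range L).mkQ a) ∈ LinearMap.range L := by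
    intro a
    rw [← Submodule.Quotient.mk_eq_zero (LinearMap.range L)]
    have : ∀ b : R', Submodule.Quotient.mk b = (LinearMap.range L).mkQ b := fun _ => rfl
    rw [this, map_sub]
    have := LinearMap.congr_fun hs ((LinearMap.range L).mkQ a)
    simp only [LinearMap.coe_comp, Function.comp_apply, LinearMap.id_apply] at this
    rw [this, sub_self]
  set f : R' →ₗ[R] R' := LinearMap.id - s ∘ₗ (LinearMap.range L).mkQ with hf
  have hfmem : ∀ a : R', f a ∈ LinearMap.range L := by
    intro a
    simpa [hf] using hmem a
  set e : R ≃ₗ[R] LinearMap.range L := LinearEquiv.ofInjective L hinj with he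
  refine ⟨e.symm.toLinearMap ∘ₗ LinearMap.codRestrict (LinearMap.range L) f hfmem, fun r => ?_⟩
  have h0 : (LinearMap.range L).mkQ (L r) = 0 := by
    rw [Submodule.mkQ_apply, Submodule.Quotient.mk_eq_zero]
    exact ⟨r, rfl⟩
  have hfr : f (algebraMap R R' r) = L r := by
    simp only [hf, LinearMap.sub_apply, LinearMap.id_apply, LinearMap.coe_comp,
      Function.comp_apply]
    have : algebraMap R R' r = L r := rfl
    rw [this, h0, map_zero, sub_zero]
  simp only [LinearMap.coe_comp, Function.comp_apply, LinearEquiv.coe_coe]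
  have hco : LinearMap.codRestrict (LinearMap.range L) f hfmem (algebraMap R R' r)
      = ⟨L r, ⟨r, rfl⟩⟩ := by
    apply Subtype.ext
    simpa using hfr
  rw [hco]
  have : e r = ⟨L r, ⟨r, rfl⟩⟩ := by
    apply Subtype.ext
    rfl
  rw [← this, LinearEquiv.symm_apply_apply]

/-- Any invariant element of `M'` lies in any effective descent submodule `N`. -/
private lemma aux_invariant_mem
    (M' : Type) [AddCommGroup M'] [Module R' M'] [Module R M'] [IsScalarTower R R' M']
    [Module.Free R' M'] [Module.Finite R' M']
    (ρ : Representation R (K' ≃ₐ[K] K') M')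
    (hsemi : ∀ (σ : K' ≃ₐ[K] K') (x : R') (m : M'),
      ρ σ (x • m) = (galRestrict R K K' R' σ x) • (ρ σ m))
    (N : Submodule R M') (hinv : ∀ σ, ∀ n ∈ N, ρ σ n = n)
    (hbc : IsBaseChange R' N.subtype)
    (m : M') (hm : ∀ σ, ρ σ m = m) : m ∈ N := by
  haveI : IsIntegrallyClosed R := inferInstance
  haveI := IsIntegralClosure.finite R K K' R'
  haveI : NoZeroSMulDivisors R K' := by
    refine (fun h : Function.Injective (algebraMap R K') => ⟨fun {c} {x} hcx => by
      haveI := Module.isTorsionFree_iff_algebraMap_injective.mpr h; exact smul_eq_zero.mp hcx⟩) ?_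
    rw [IsScalarTower.algebraMap_eq R K K']
    exact (algebraMap K K').injective.comp (IsFractionRing.injective R K)
  haveI : Module.Free R R' := IsIntegralClosure.module_free R K K' R'
  haveI : Module.Finite R M' := Module.Finite.trans R' M'
  haveI : IsNoetherian R M' := isNoetherian_of_isNoetherianRing_of_finite R M'
  haveI : Module.Finite R N := Module.Finite.iff_fg.mpr (IsNoetherian.noetherian N)
  haveI : NoZeroSMulDivisors R' M' := by
    obtain ⟨⟨I, bI⟩⟩ := Module.Free.exists_basis (R := R') (M := M')
    exact ⟨fun hcx => bI.smul_eq_zero.mp hcx⟩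
  haveI : NoZeroSMulDivisors R M' := by
    refine ⟨fun {x} {v} hxv => ?_⟩
    by_cases hx : x = 0
    · exact Or.inl hx
    refine Or.inr ?_
    have : algebraMap R R' x • v = 0 := by rwa [algebraMap_smul]
    have hinj : Function.Injective (algebraMap R R') := by
      intro u w huw
      have : Function.Injective (algebraMap R K') := by
        rw [IsScalarTower.algebraMap_eq R K K']
        exact (algebraMap K K').injective.comp (IsFractionRing.injective R K)
      apply this
      rw [IsScalarTower.algebraMap_apply R R' K', huw, ← IsScalarTower.algebraMap_apply]
    rcases eq_zero_or_eq_zero_of_smul_eq_zero this with h | h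
    · exact absurd (hinj (by rw [h, map_zero])) hx
    · exact h
  haveI : NoZeroSMulDivisors R N := by
    refine ⟨fun {x} {v} hxv => ?_⟩
    have : x • (v : M') = 0 := by
      rw [← Submodule.coe_smul, hxv, Submodule.coe_zero]
    rcases eq_zero_or_eq_zero_of_smul_eq_zero this with h | h
    · exact Or.inl h
    · exact Or.inr (Subtype.ext h)
  haveI : Module.Free R N := Module.free_of_finite_type_torsion_free'
  let ι := Module.Free.ChooseBasisIndex R N
  let b : Module.Basis ι R N := Module.Free.chooseBasis R N
  let bM : Module.Basis ι R' M' := (b.baseChange R').map hbc.equiv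
  have hbMeq : ∀ i, bM i = (b i : M') := by
    intro i
    show ((b.baseChange R').map hbc.equiv) i = _
    rw [Module.Basis.map_apply, Module.Basis.baseChange_apply, hbc.equiv_tmul, one_smul,
      Submodule.subtype_apply]
  let c : ι → R' := fun i => bM.repr m i
  have hmsum : m = ∑ i, c i • bM i := (bM.sum_repr m).symm
  have hfix : ∀ i, ∀ σ : K' ≃ₐ[K] K', galRestrict R K K' R' σ (c i) = c i := by
    intro i σ
    have h1 : ρ σ m = ∑ j, galRestrict R K K' R' σ (c j) • bM j := by
      conv_lhs => rw [hmsum]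
      rw [map_sum]
      refine Finset.sum_congr rfl fun j _ => ?_
      rw [hsemi, hbMeq j, hinv σ _ (b j).2]
    rw [hm σ] at h1
    have h3 := bM.repr_sum_self (fun j => galRestrict R K K' R' σ (c j))
    have h2 : c i = galRestrict R K K' R' σ (c i) := by
      calc c i = bM.repr m i := rfl
        _ = bM.repr (∑ j, galRestrict R K K' R' σ (c j) • bM j) i := by rw [← h1]
        _ = galRestrict R K K' R' σ (c i) := by rw [h3]
    exact h2.symm
  have hcr : ∀ i, ∃ r : R, algebraMap R R' r = c i := fun i =>
    aux_fixed_mem R K K' R' (c i) (hfix i)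
  choose r hr using hcr
  rw [hmsum]
  refine Submodule.sum_mem N fun i _ => ?_
  rw [← hr i, hbMeq i, algebraMap_smul]
  exact N.smul_mem (r i) (b i).2

/-- Lifting lemma: given the retraction `π`, an element of `N₃` lifts to `N₂`. -/
private lemma aux_lift
    (π : R' →ₗ[R] R) (hπ : ∀ r : R, π (algebraMap R R' r) = r)
    (M'₂ M'₃ : Type)
    [AddCommGroup M'₂] [Module R' M'₂] [Module R M'₂] [IsScalarTower R R' M'₂]
    [AddCommGroup M'₃] [Module R' M'₃] [Module R M'₃] [IsScalarTower R R' M'₃]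
    (N₂ : Submodule R M'₂) (N₃ : Submodule R M'₃)
    (hbc₂ : IsBaseChange R' N₂.subtype) (hbc₃ : IsBaseChange R' N₃.subtype)
    (g₂ : M'₂ →ₗ[R'] M'₃) (hg₂ : Function.Surjective g₂)
    (hmapsto : ∀ n ∈ N₂, g₂ n ∈ N₃)
    (n₃ : M'₃) (hn₃ : n₃ ∈ N₃) : ∃ n₂ ∈ N₂, g₂ n₂ = n₃ := by
  let G : N₂ →ₗ[R] N₃ := (g₂.restrictScalars R).restrict hmapsto
  have hG : ∀ n : N₂, (G n : M'₃) = g₂ n := fun n => rfl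
  let F : TensorProduct R R' N₂ →ₗ[R] TensorProduct R R' N₃ := LinearMap.lTensor R' G
  let p₂ : TensorProduct R R' N₂ →ₗ[R] N₂ := TensorProduct.lift ((LinearMap.lsmul R N₂).comp π)
  let p₃ : TensorProduct R R' N₃ →ₗ[R] N₃ := TensorProduct.lift ((LinearMap.lsmul R N₃).comp π)
  have hp₂ : ∀ (a : R') (n : N₂), p₂ (a ⊗ₜ n) = π a • n := fun a n => rfl
  have hp₃ : ∀ (a : R') (n : N₃), p₃ (a ⊗ₜ n) = π a • n := fun a n => rfl
  have claim1 : ∀ t, (hbc₃.equiv (F t) : M'₃) = g₂ (hbc₂.equiv t) := by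
    intro t
    induction t using TensorProduct.induction_on with
    | zero => simp
    | tmul a n =>
        show (hbc₃.equiv (a ⊗ₜ (G n)) : M'₃) = g₂ (hbc₂.equiv (a ⊗ₜ n))
        rw [hbc₃.equiv_tmul, hbc₂.equiv_tmul, Submodule.subtype_apply, Submodule.subtype_apply,
          hG, map_smul]
    | add u v hu hv => simp only [map_add, hu, hv]
  have claim2 : ∀ t, p₃ (F t) = G (p₂ t) := by
    intro t
    induction t using TensorProduct.induction_on with
    | zero => simp
    | tmul a n =>
        show p₃ (a ⊗ₜ (G n)) = G (p₂ (a ⊗ₜ n))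
        rw [hp₃, hp₂, map_smul]
    | add u v hu hv => simp only [map_add, hu, hv]
  obtain ⟨m₂, hm₂⟩ := hg₂ n₃
  set t : TensorProduct R R' N₂ := hbc₂.equiv.symm m₂ with ht
  have hu : F t = (1 : R') ⊗ₜ (⟨n₃, hn₃⟩ : N₃) := by
    apply hbc₃.equiv.injective
    rw [claim1 t, ht, LinearEquiv.apply_symm_apply, hm₂, hbc₃.equiv_tmul, one_smul,
      Submodule.subtype_apply]
  have := claim2 t
  rw [hu, hp₃] at this
  refine ⟨p₂ t, (p₂ t).2, ?_⟩
  have : G (p₂ t) = π 1 • (⟨n₃, hn₃⟩ : N₃) := this.symm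
  have h1 : π (1 : R') = 1 := by simpa using hπ 1
  rw [h1, one_smul] at this
  have := congrArg (Subtype.val) this
  rw [hG] at this
  exact this
end AuxDescent

/-- A short exact sequence `0 → M'₁ → M'₂ → M'₃ → 0` of `Γ`-descent
modules over `R'`, with each `M'ᵢ` finite free over `R'`, admits an effective descent to a
short exact sequence of `R`-modules if and only if each `(M'ᵢ, ρᵢ)` individually admits an
effective descent. -/
theorem statement7
    (R : Type) [CommRing R] [IsDomain R] [IsDiscreteValuationRing R]
    (K : Type) [Field K] [Algebra R K] [IsFractionRing R K]
    (K' : Type) [Field K'] [Algebra K K'] [FiniteDimensional K K'] [IsGalois K K']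
    [Algebra R K'] [IsScalarTower R K K']
    (R' : Type) [CommRing R'] [IsDomain R'] [IsDiscreteValuationRing R']
    [Algebra R R'] [Algebra R' K'] [IsScalarTower R R' K']
    [IsIntegralClosure R' R K']
    (M'₁ M'₂ M'₃ : Type)
    [AddCommGroup M'₁] [Module R' M'₁] [Module R M'₁] [IsScalarTower R R' M'₁]
    [AddCommGroup M'₂] [Module R' M'₂] [Module R M'₂] [IsScalarTower R R' M'₂]
    [AddCommGroup M'₃] [Module R' M'₃] [Module R M'₃] [IsScalarTower R R' M'₃]
    [Module.Free R' M'₁] [Module.Finite R' M'₁]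
    [Module.Free R' M'₂] [Module.Finite R' M'₂]
    [Module.Free R' M'₃] [Module.Finite R' M'₃]
    (ρ₁ : Representation R (K' ≃ₐ[K] K') M'₁)
    (ρ₂ : Representation R (K' ≃ₐ[K] K') M'₂)
    (ρ₃ : Representation R (K' ≃ₐ[K] K') M'₃)
    (hsemi₁ : ∀ (σ : K' ≃ₐ[K] K') (x : R') (m : M'₁),
      ρ₁ σ (x • m) = (galRestrict R K K' R' σ x) • (ρ₁ σ m))
    (hsemi₂ : ∀ (σ : K' ≃ₐ[K] K') (x : R') (m : M'₂),
      ρ₂ σ (x • m) = (galRestrict R K K' R' σ x) • (ρ₂ σ m))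
    (hsemi₃ : ∀ (σ : K' ≃ₐ[K] K') (x : R') (m : M'₃),
      ρ₃ σ (x • m) = (galRestrict R K K' R' σ x) • (ρ₃ σ m))
    -- the short exact sequence `0 → M'₁ → M'₂ → M'₃ → 0` of `Γ`-descent modules:
    (g₁ : M'₁ →ₗ[R'] M'₂) (g₂ : M'₂ →ₗ[R'] M'₃)
    (hg₁ : Function.Injective g₁) (hg₂ : Function.Surjective g₂)
    (hexact : Function.Exact g₁ g₂)
    (heq₁ : ∀ σ m, g₁ (ρ₁ σ m) = ρ₂ σ (g₁ m))
    (heq₂ : ∀ σ m, g₂ (ρ₂ σ m) = ρ₃ σ (g₂ m)) :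
    -- the sequence admits an effective descent to an exact sequence of `R`-modules
    (∃ (N₁ : Submodule R M'₁) (N₂ : Submodule R M'₂) (N₃ : Submodule R M'₃),
        (∀ σ, ∀ n ∈ N₁, ρ₁ σ n = n) ∧ (∀ σ, ∀ n ∈ N₂, ρ₂ σ n = n) ∧
        (∀ σ, ∀ n ∈ N₃, ρ₃ σ n = n) ∧
        IsBaseChange R' N₁.subtype ∧ IsBaseChange R' N₂.subtype ∧
        IsBaseChange R' N₃.subtype ∧
        Submodule.map (g₁.restrictScalars R) N₁
          = N₂ ⊓ LinearMap.ker (g₂.restrictScalars R) ∧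
        Submodule.map (g₂.restrictScalars R) N₂ = N₃)
    ↔ (HasEffectiveDescent R R' (K' ≃ₐ[K] K') M'₁ ρ₁ ∧
       HasEffectiveDescent R R' (K' ≃ₐ[K] K') M'₂ ρ₂ ∧
       HasEffectiveDescent R R' (K' ≃ₐ[K] K') M'₃ ρ₃) := by
  constructor
  · rintro ⟨N₁, N₂, N₃, h1, h2, h3, b1, b2, b3, -, -⟩
    exact ⟨⟨N₁, h1, b1⟩, ⟨N₂, h2, b2⟩, ⟨N₃, h3, b3⟩⟩
  · rintro ⟨⟨N₁, h1, b1⟩, ⟨N₂, h2, b2⟩, ⟨N₃, h3, b3⟩⟩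
    obtain ⟨π, hπ⟩ := aux_retraction R K K' R'
    refine ⟨N₁, N₂, N₃, h1, h2, h3, b1, b2, b3, ?_, ?_⟩
    · -- `g₁(N₁) = N₂ ⊓ ker g₂`
      apply le_antisymm
      · rintro _ ⟨n, hn, rfl⟩
        refine ⟨aux_invariant_mem R K K' R' M'₂ ρ₂ hsemi₂ N₂ h2 b2 _ (fun σ => ?_), ?_⟩
        · show ρ₂ σ (g₁ n) = g₁ n
          rw [← heq₁, h1 σ n hn]
        · show g₂ (g₁ n) = 0
          exact (hexact (g₁ n)).mpr ⟨n, rfl⟩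
      · rintro m ⟨hmN₂, hker⟩
        have hker' : g₂ m = 0 := hker
        obtain ⟨n, rfl⟩ := (hexact m).mp hker'
        refine ⟨n, aux_invariant_mem R K K' R' M'₁ ρ₁ hsemi₁ N₁ h1 b1 n (fun σ => ?_), rfl⟩
        apply hg₁
        rw [heq₁, h2 σ _ hmN₂]
    · -- `g₂(N₂) = N₃`
      have hmapsto : ∀ n ∈ N₂, g₂ n ∈ N₃ := by
        intro n hn
        refine aux_invariant_mem R K K' R' M'₃ ρ₃ hsemi₃ N₃ h3 b3 _ (fun σ => ?_)
        rw [← heq₂, h2 σ n hn]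
      apply le_antisymm
      · rintro _ ⟨n, hn, rfl⟩
        exact hmapsto n hn
      · intro n₃ hn₃
        obtain ⟨n₂, hn₂, hg⟩ := aux_lift R R' π hπ M'₂ M'₃ N₂ N₃ b2 b3 g₂ hg₂ hmapsto n₃ hn₃
        exact ⟨n₂, hn₂, hg⟩
end
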